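/- Assume additionally that ψ₁ is concave on (0, d). Then Ψ is continuously differentiable on (0,∞) with Ψ'(d) = 1, Ψ'(x) ≥ 1 for 0 < x < d, and Ψ'(x) ≤ 1 for x > d, and Ψ satisfies the Hamilton–Jacobi–Bellman equation of the restricted dividend problem: for every x > 0, the supremum over u ∈ [0, u₀] of (g(x) − u)·Ψ'(x) − (λ+δ)·Ψ(x) + λ·∫₀ˣ Ψ(x−y)·α·e^{−αy} dy + u equals 0. -/

import Mathlib

open Set intervalIntegral

lemma integral_shift (f : ℝ → ℝ) (al x : ℝ) :
    (∫ y in (0:ℝ)..x, f (x - y) * (al * Real.exp (-al * y)))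
      = al * Real.exp (-al * x) * ∫ s in (0:ℝ)..x, f s * Real.exp (al * s) := by
  have key := intervalIntegral.integral_comp_sub_left
    (a := (0:ℝ)) (b := x) (fun s => f s * (al * Real.exp (-al * (x - s)))) x
  rw [sub_self, sub_zero] at key
  have h1 : (∫ y in (0:ℝ)..x, f (x - y) * (al * Real.exp (-al * y)))
      = ∫ y in (0:ℝ)..x, (fun s => f s * (al * Real.exp (-al * (x - s)))) (x - y) := by
    apply intervalIntegral.integral_congr
    intro y _
    simp only [sub_sub_cancel]
  rw [h1, key, ← intervalIntegral.integral_const_mul]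
  apply intervalIntegral.integral_congr
  intro s _
  simp only []
  rw [show -al * (x - s) = -al * x + al * s by ring, Real.exp_add]
  ring

lemma integral_alexp (al b : ℝ) :
    (∫ y in (0:ℝ)..b, al * Real.exp (-al * y)) = 1 - Real.exp (-al * b) := by
  have h : ∀ y : ℝ, HasDerivAt (fun t => -Real.exp (-al * t)) (al * Real.exp (-al * y)) y := by
    intro y
    have := ((Real.hasDerivAt_exp (-al * y)).comp y ((hasDerivAt_id y).const_mul (-al)))
    have h2 := this.neg
    simp only [Function.comp_def, Pi.neg_def] at h2
    exact h2.congr_deriv (by ring)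
  have hcont : Continuous fun y : ℝ => al * Real.exp (-al * y) :=
    continuous_const.mul (Real.continuous_exp.comp (continuous_const.mul continuous_id))
  rw [intervalIntegral.integral_eq_sub_of_hasDerivAt (fun y _ => h y)
    hcont.continuousOn.intervalIntegrable]
  simp [Real.exp_zero]
  ring

/-- Assuming additionally that ψ₁ is concave on (0, d), the function Ψ is
continuously differentiable on (0,∞) with Ψ'(d) = 1, Ψ' ≥ 1 on (0, d), Ψ' ≤ 1 on
(d, ∞), and Ψ satisfies the HJB equation of the restricted dividend problem: for every
x > 0, sup_{u ∈ [0,u₀]} { (g(x)−u)Ψ'(x) − (λ+δ)Ψ(x) + λ∫₀ˣ Ψ(x−y)αe^{−αy}dy + u } = 0. -/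
theorem stmt_9 (lam del al u0 d : ℝ)
    (g g' ψ₁ ψ₁' ψ₂ ψ₂' ψ₂'' Ψ : ℝ → ℝ)
    (hlam : 0 < lam) (hdel : 0 < del) (hal : 0 < al) (hu0 : 0 < u0)
    (hg : ∀ x ≥ (0:ℝ), HasDerivAt g (g' x) x)
    (hg'c : ContinuousOn g' (Set.Ici 0))
    (hgu : ∀ x ≥ (0:ℝ), u0 < g x)
    (hψ₁d : ∀ x ≥ (0:ℝ), HasDerivAt ψ₁ (ψ₁' x) x)
    (hψ₁'c : ContinuousOn ψ₁' (Set.Ici 0))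
    (hψ₁mono : StrictMonoOn ψ₁ (Set.Ici 0))
    (hψ₁eq : ∀ x > (0:ℝ),
      g x * ψ₁' x - (lam + del) * ψ₁ x
        + lam * ∫ y in (0:ℝ)..x, ψ₁ (x - y) * (al * Real.exp (-al * y)) = 0)
    (hψ₂bdd : ∃ M : ℝ, ∀ x ≥ (0:ℝ), |ψ₂ x| ≤ M)
    (hψ₂d : ∀ x ≥ (0:ℝ), HasDerivAt ψ₂ (ψ₂' x) x)
    (hψ₂d2 : ∀ x ≥ (0:ℝ), HasDerivAt ψ₂' (ψ₂'' x) x)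
    (hψ₂''c : ContinuousOn ψ₂'' (Set.Ici 0))
    (hψ₂conc : ConcaveOn ℝ (Set.Ici 0) ψ₂)
    (hψ₂eq : ∀ x > (0:ℝ),
      (g x - u0) * ψ₂'' x + (al * (g x - u0) + g' x - (lam + del)) * ψ₂' x
        - al * del * ψ₂ x = 0)
    (hd : 0 < d) (hψ₂'d : 0 < ψ₂' d)
    (hmatch : ψ₁ d / ψ₁' d - ψ₂ d / ψ₂' d = u0 / del)
    (hΨ : ∀ x, Ψ x = if x < d then ψ₁ x / ψ₁' d else u0 / del + ψ₂ x / ψ₂' d)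
    (hψ₁conc : ConcaveOn ℝ (Set.Ioo 0 d) ψ₁) :
    (∀ x > (0:ℝ), DifferentiableAt ℝ Ψ x) ∧
    ContinuousOn (deriv Ψ) (Set.Ioi 0) ∧
    deriv Ψ d = 1 ∧
    (∀ x : ℝ, 0 < x → x < d → 1 ≤ deriv Ψ x) ∧
    (∀ x : ℝ, d < x → deriv Ψ x ≤ 1) ∧
    ∀ x > (0:ℝ),
      sSup ((fun u => (g x - u) * deriv Ψ x - (lam + del) * Ψ x
          + lam * (∫ y in (0:ℝ)..x, Ψ (x - y) * (al * Real.exp (-al * y))) + u) ''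
        Set.Icc (0:ℝ) u0) = 0 := by
  have hc2 : 0 < ψ₂' d := hψ₂'d
  have hc2ne : ψ₂' d ≠ 0 := ne_of_gt hc2
  have hψ₁cont : ∀ x ≥ (0:ℝ), ContinuousAt ψ₁ x := fun x hx => (hψ₁d x hx).continuousAt
  have hψ₂'cont : ∀ x ≥ (0:ℝ), ContinuousAt ψ₂' x := fun x hx => (hψ₂d2 x hx).continuousAt
  -- ψ₁' is nonnegative on [0,∞)
  have hψ₁'nonneg : ∀ x ≥ (0:ℝ), 0 ≤ ψ₁' x := by
    intro x hx
    have ht : Filter.Tendsto (slope ψ₁ x) (nhdsWithin x (Set.Ioi x)) (nhds (ψ₁' x)) :=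
      (hasDerivAt_iff_tendsto_slope.mp (hψ₁d x hx)).mono_left
        (nhdsWithin_mono x fun y hy => hy.ne')
    refine ge_of_tendsto ht ?_
    filter_upwards [self_mem_nhdsWithin] with y hy
    rw [slope_def_field]
    apply div_nonneg
    · exact sub_nonneg.mpr (hψ₁mono hx (hx.trans hy.le) hy).le
    · exact sub_nonneg.mpr hy.le
  have hψ₁contOn : ContinuousOn ψ₁ (Set.Ici 0) :=
    fun x hx => (hψ₁cont x hx).continuousWithinAt
  have hexpcont : Continuous fun s : ℝ => Real.exp (al * s) :=
    Real.continuous_exp.comp (continuous_const.mul continuous_id)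
  have hintcont : ContinuousOn (fun s => ψ₁ s * Real.exp (al * s)) (Set.Ici 0) :=
    hψ₁contOn.mul hexpcont.continuousOn
  -- rewritten ψ₁ equation
  have hψ₁eq' : ∀ x > (0:ℝ), g x * ψ₁' x - (lam + del) * ψ₁ x
      + lam * (al * Real.exp (-al * x) * ∫ s in (0:ℝ)..x, ψ₁ s * Real.exp (al * s)) = 0 := by
    intro x hx
    have h := hψ₁eq x hx
    rwa [integral_shift] at h
  -- ψ₁ 0 ≥ 0
  have hψ₁0 : 0 ≤ ψ₁ 0 := by
    have hJcont : Filter.Tendsto (fun x => ∫ s in (0:ℝ)..x, ψ₁ s * Real.exp (al * s))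
        (nhdsWithin 0 (Set.Ioi 0)) (nhds 0) := by
      have h1 : ContinuousOn (fun x => ∫ s in (0:ℝ)..x, ψ₁ s * Real.exp (al * s))
          (Set.uIcc (0:ℝ) 1) := by
        apply intervalIntegral.continuousOn_primitive_interval
        apply ContinuousOn.integrableOn_compact isCompact_uIcc
        exact hintcont.mono (by rw [Set.uIcc_of_le (zero_le_one)]; exact fun y hy => hy.1)
      have h2 := (h1 0 (Set.left_mem_uIcc)).tendsto
      rw [intervalIntegral.integral_same] at h2
      refine h2.mono_left (nhdsWithin_le_of_mem ?_)
      have : Set.Ioo (0:ℝ) 1 ∈ nhdsWithin 0 (Set.Ioi 0) :=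
        Ioo_mem_nhdsGT_of_mem ⟨le_refl 0, zero_lt_one⟩
      exact Filter.mem_of_superset this (fun y hy =>
        Set.mem_uIcc.mpr (Or.inl ⟨hy.1.le, hy.2.le⟩))
    have hgt : Filter.Tendsto g (nhdsWithin 0 (Set.Ioi 0)) (nhds (g 0)) :=
      ((hg 0 le_rfl).continuousAt.tendsto).mono_left nhdsWithin_le_nhds
    have hψ₁t : Filter.Tendsto ψ₁ (nhdsWithin 0 (Set.Ioi 0)) (nhds (ψ₁ 0)) :=
      ((hψ₁cont 0 le_rfl).tendsto).mono_left nhdsWithin_le_nhds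
    have hψ₁'t : Filter.Tendsto ψ₁' (nhdsWithin 0 (Set.Ioi 0)) (nhds (ψ₁' 0)) :=
      ((hψ₁'c 0 Set.self_mem_Ici).tendsto).mono_left
        (nhdsWithin_mono 0 Set.Ioi_subset_Ici_self)
    have hexpt : Filter.Tendsto (fun x : ℝ => Real.exp (-al * x))
        (nhdsWithin 0 (Set.Ioi 0)) (nhds 1) := by
      have hc : Continuous fun x : ℝ => Real.exp (-al * x) :=
        Real.continuous_exp.comp (continuous_const.mul continuous_id)
      have h0 := hc.tendsto 0
      rw [mul_zero, Real.exp_zero] at h0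
      exact h0.mono_left nhdsWithin_le_nhds
    have hlim : Filter.Tendsto
        (fun x => g x * ψ₁' x - (lam + del) * ψ₁ x
          + lam * (al * Real.exp (-al * x) * ∫ s in (0:ℝ)..x, ψ₁ s * Real.exp (al * s)))
        (nhdsWithin 0 (Set.Ioi 0))
        (nhds (g 0 * ψ₁' 0 - (lam + del) * ψ₁ 0 + lam * (al * 1 * 0))) := by
      exact ((hgt.mul hψ₁'t).sub (Filter.Tendsto.const_mul _ hψ₁t)).add
        (Filter.Tendsto.const_mul _ ((Filter.Tendsto.const_mul _ hexpt).mul hJcont))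
    have hzero : Filter.Tendsto
        (fun x => g x * ψ₁' x - (lam + del) * ψ₁ x
          + lam * (al * Real.exp (-al * x) * ∫ s in (0:ℝ)..x, ψ₁ s * Real.exp (al * s)))
        (nhdsWithin 0 (Set.Ioi 0)) (nhds 0) := by
      refine Filter.Tendsto.congr' ?_ tendsto_const_nhds
      filter_upwards [self_mem_nhdsWithin] with y hy
      exact (hψ₁eq' y hy).symm
    have := tendsto_nhds_unique hlim hzero
    have hkey : g 0 * ψ₁' 0 = (lam + del) * ψ₁ 0 := by
      rw [mul_one, mul_zero, mul_zero, add_zero] at this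
      linarith
    have h1 : 0 ≤ g 0 * ψ₁' 0 :=
      mul_nonneg (le_of_lt (lt_trans hu0 (hgu 0 le_rfl))) (hψ₁'nonneg 0 le_rfl)
    nlinarith
  have hψ₁dpos : 0 < ψ₁ d := lt_of_le_of_lt hψ₁0 (hψ₁mono Set.self_mem_Ici hd.le hd)
  -- ψ₁' d > 0
  have hc1 : 0 < ψ₁' d := by
    rcases lt_or_eq_of_le (hψ₁'nonneg d hd.le) with h | h
    · exact h
    · exfalso
      have heq := hψ₁eq d hd
      rw [← h, mul_zero] at heq
      have hmono' : ∀ y ∈ Set.Icc (0:ℝ) d, ψ₁ (d - y) * (al * Real.exp (-al * y))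
          ≤ ψ₁ d * (al * Real.exp (-al * y)) := by
        intro y hy
        apply mul_le_mul_of_nonneg_right
        · rcases eq_or_lt_of_le (sub_le_self d hy.1) with h' | h'
          · rw [h']
          · exact (hψ₁mono (by simp [hy.2, sub_nonneg]) hd.le h').le
        · positivity
      have hint1 : IntervalIntegrable (fun y => ψ₁ (d - y) * (al * Real.exp (-al * y)))
          MeasureTheory.volume 0 d := by
        apply ContinuousOn.intervalIntegrable
        apply ContinuousOn.mul
        · apply hψ₁contOn.comp (continuous_const.sub continuous_id).continuousOn
          intro y hy
          rw [Set.uIcc_of_le hd.le] at hy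
          simpa using hy.2
        · exact (continuous_const.mul (Real.continuous_exp.comp
            (continuous_const.mul continuous_id))).continuousOn
      have hint2 : IntervalIntegrable (fun y => ψ₁ d * (al * Real.exp (-al * y)))
          MeasureTheory.volume 0 d :=
        (continuous_const.mul (continuous_const.mul (Real.continuous_exp.comp
          (continuous_const.mul continuous_id)))).intervalIntegrable 0 d
      have hile := intervalIntegral.integral_mono_on hd.le hint1 hint2 hmono'
      rw [intervalIntegral.integral_const_mul, integral_alexp] at hile
      have hexplt : 0 < Real.exp (-al * d) := Real.exp_pos _
      nlinarith [mul_le_mul_of_nonneg_left hile hlam.le, mul_pos hlam (mul_pos hψ₁dpos hexplt), mul_pos hdel hψ₁dpos]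
  have hc1ne : ψ₁' d ≠ 0 := ne_of_gt hc1
  -- values of Ψ
  have hΨlt : ∀ x, x < d → Ψ x = ψ₁ x / ψ₁' d := fun x hx => by rw [hΨ x, if_pos hx]
  have hΨge : ∀ x, d ≤ x → Ψ x = u0 / del + ψ₂ x / ψ₂' d :=
    fun x hx => by rw [hΨ x, if_neg (not_lt.mpr hx)]
  have hΨdd : Ψ d = ψ₁ d / ψ₁' d := by
    rw [hΨge d le_rfl]; linarith [hmatch]
  have hΨle : ∀ x, x ≤ d → Ψ x = ψ₁ x / ψ₁' d := by
    intro x hx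
    rcases lt_or_eq_of_le hx with h | h
    · exact hΨlt x h
    · rw [h]; exact hΨdd
  -- derivatives of Ψ
  have hΨd_lt : ∀ x, 0 ≤ x → x < d → HasDerivAt Ψ (ψ₁' x / ψ₁' d) x := by
    intro x hx hxd
    have h := (hψ₁d x hx).div_const (ψ₁' d)
    apply h.congr_of_eventuallyEq
    filter_upwards [Iio_mem_nhds hxd] with y hy
    exact hΨlt y hy
  have hΨd_gt : ∀ x, d < x → HasDerivAt Ψ (ψ₂' x / ψ₂' d) x := by
    intro x hx
    have h := ((hψ₂d x (hd.le.trans hx.le)).div_const (ψ₂' d)).const_add (u0 / del)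
    apply h.congr_of_eventuallyEq
    filter_upwards [Ioi_mem_nhds hx] with y hy
    exact hΨge y hy.le
  have hΨd_d : HasDerivAt Ψ 1 d := by
    have h1 : HasDerivWithinAt Ψ 1 (Set.Iic d) d := by
      have h := ((hψ₁d d hd.le).div_const (ψ₁' d)).hasDerivWithinAt (s := Set.Iic d)
      rw [div_self hc1ne] at h
      exact h.congr (fun y hy => hΨle y hy) (hΨle d le_rfl)
    have h2 : HasDerivWithinAt Ψ 1 (Set.Ici d) d := by
      have h := (((hψ₂d d hd.le).div_const (ψ₂' d)).const_add (u0 / del)).hasDerivWithinAt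
        (s := Set.Ici d)
      rw [div_self hc2ne] at h
      exact h.congr (fun y hy => hΨge y hy) (hΨge d le_rfl)
    have h3 := h1.union h2
    rw [Set.Iic_union_Ici] at h3
    exact hasDerivWithinAt_univ.mp h3
  have hDlt : ∀ x, 0 ≤ x → x < d → deriv Ψ x = ψ₁' x / ψ₁' d :=
    fun x hx hxd => (hΨd_lt x hx hxd).deriv
  have hDgt : ∀ x, d < x → deriv Ψ x = ψ₂' x / ψ₂' d := fun x hx => (hΨd_gt x hx).deriv
  have hDd : deriv Ψ d = 1 := hΨd_d.deriv
  have hdiff : ∀ x > (0:ℝ), DifferentiableAt ℝ Ψ x := by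
    intro x hx
    rcases lt_trichotomy x d with h | h | h
    · exact (hΨd_lt x hx.le h).differentiableAt
    · exact h ▸ hΨd_d.differentiableAt
    · exact (hΨd_gt x h).differentiableAt
  -- deriv Ψ ≤ 1 above d
  have hψ₂'anti : ∀ x, d ≤ x → ψ₂' x ≤ ψ₂' d := by
    intro x hx
    have hanti2 : AntitoneOn (deriv ψ₂) (Set.Ici 0) :=
      hψ₂conc.antitoneOn_deriv (fun z hz => (hψ₂d z hz).differentiableAt)
    have h := hanti2 (Set.mem_Ici.mpr hd.le) (Set.mem_Ici.mpr (hd.le.trans hx)) hx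
    rwa [(hψ₂d d hd.le).deriv, (hψ₂d x (hd.le.trans hx)).deriv] at h
  have hD_le_one : ∀ x, d < x → deriv Ψ x ≤ 1 := by
    intro x hx
    rw [hDgt x hx, div_le_one hc2]
    exact hψ₂'anti x hx.le
  -- deriv Ψ ≥ 1 below d
  have hψ₁'ge : ∀ x, 0 < x → x < d → ψ₁' d ≤ ψ₁' x := by
    intro x hx hxd
    have hanti1 : AntitoneOn (deriv ψ₁) (Set.Ioo 0 d) :=
      hψ₁conc.antitoneOn_deriv (fun z hz => (hψ₁d z hz.1.le).differentiableAt)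
    have hT : Filter.Tendsto ψ₁' (nhdsWithin d (Set.Iio d)) (nhds (ψ₁' d)) := by
      have h1 : Filter.Tendsto ψ₁' (nhdsWithin d (Set.Ici 0)) (nhds (ψ₁' d)) :=
        (hψ₁'c d (Set.mem_Ici.mpr hd.le)).tendsto
      refine h1.mono_left (nhdsWithin_le_of_mem (mem_nhdsWithin_of_mem_nhds
        (Filter.mem_of_superset (Ioi_mem_nhds hd) Set.Ioi_subset_Ici_self)))
    refine le_of_tendsto hT ?_
    filter_upwards [self_mem_nhdsWithin,
      mem_nhdsWithin_of_mem_nhds (Ioi_mem_nhds hxd)] with z hz1 hz2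
    have h := hanti1 (Set.mem_Ioo.mpr ⟨hx, hxd⟩) (Set.mem_Ioo.mpr ⟨hx.trans hz2, hz1⟩) hz2.le
    rwa [(hψ₁d z (hx.trans hz2).le).deriv, (hψ₁d x hx.le).deriv] at h
  have hD_ge_one : ∀ x, 0 < x → x < d → 1 ≤ deriv Ψ x := by
    intro x hx hxd
    rw [hDlt x hx.le hxd, le_div_iff₀ hc1, one_mul]
    exact hψ₁'ge x hx hxd
  -- continuity of deriv Ψ on (0,∞)
  have hderivCont : ContinuousOn (deriv Ψ) (Set.Ioi 0) := by
    intro x hx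
    rcases lt_trichotomy x d with h | h | h
    · have hca : ContinuousAt (fun y => ψ₁' y / ψ₁' d) x :=
        (hψ₁'c.continuousAt (Filter.mem_of_superset (Ioi_mem_nhds hx)
          Set.Ioi_subset_Ici_self)).div_const _
      have hev : (fun y => ψ₁' y / ψ₁' d) =ᶠ[nhds x] deriv Ψ := by
        filter_upwards [Ioi_mem_nhds hx, Iio_mem_nhds h] with y hy1 hy2
        exact (hDlt y (le_of_lt hy1) hy2).symm
      exact (hca.congr hev).continuousWithinAt
    · subst h
      have hleft : ContinuousWithinAt (deriv Ψ) (Set.Iic x) x := by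
        have hfil : nhdsWithin x (Set.Iic x) ≤ nhdsWithin x (Set.Ici 0) :=
          nhdsWithin_le_of_mem (mem_nhdsWithin_of_mem_nhds
            (Filter.mem_of_superset (Ioi_mem_nhds hx) Set.Ioi_subset_Ici_self))
        have hbase : Filter.Tendsto (fun y => ψ₁' y / ψ₁' x)
            (nhdsWithin x (Set.Iic x)) (nhds (ψ₁' x / ψ₁' x)) :=
          (((hψ₁'c x (Set.mem_Ici.mpr hd.le)).tendsto).mono_left hfil).div_const _
        rw [div_self hc1ne] at hbase
        have hev : (fun y => ψ₁' y / ψ₁' x) =ᶠ[nhdsWithin x (Set.Iic x)] deriv Ψ := by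
          filter_upwards [self_mem_nhdsWithin,
            mem_nhdsWithin_of_mem_nhds (Ioi_mem_nhds hx)] with y hy1 hy2
          rcases lt_or_eq_of_le (Set.mem_Iic.mp hy1) with h' | h'
          · exact (hDlt y (le_of_lt hy2) h').symm
          · rw [h', hDd, div_self hc1ne]
        have : Filter.Tendsto (deriv Ψ) (nhdsWithin x (Set.Iic x)) (nhds 1) :=
          hbase.congr' hev
        unfold ContinuousWithinAt
        rwa [hDd]
      have hright : ContinuousWithinAt (deriv Ψ) (Set.Ici x) x := by
        have hbase : Filter.Tendsto (fun y => ψ₂' y / ψ₂' x)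
            (nhdsWithin x (Set.Ici x)) (nhds (ψ₂' x / ψ₂' x)) :=
          (((hψ₂'cont x hd.le).tendsto).mono_left nhdsWithin_le_nhds).div_const _
        rw [div_self hc2ne] at hbase
        have hev : (fun y => ψ₂' y / ψ₂' x) =ᶠ[nhdsWithin x (Set.Ici x)] deriv Ψ := by
          filter_upwards [self_mem_nhdsWithin] with y hy1
          rcases lt_or_eq_of_le (Set.mem_Ici.mp hy1) with h' | h'
          · exact (hDgt y h').symm
          · rw [← h', hDd, div_self hc2ne]
        have : Filter.Tendsto (deriv Ψ) (nhdsWithin x (Set.Ici x)) (nhds 1) :=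
          hbase.congr' hev
        unfold ContinuousWithinAt
        rwa [hDd]
      have hu := hleft.union hright
      rw [Set.Iic_union_Ici] at hu
      exact (continuousWithinAt_univ _ _ |>.mp hu).continuousWithinAt
    · have hca : ContinuousAt (fun y => ψ₂' y / ψ₂' d) x :=
        (hψ₂'cont x (hd.le.trans h.le)).div_const _
      have hev : (fun y => ψ₂' y / ψ₂' d) =ᶠ[nhds x] deriv Ψ := by
        filter_upwards [Ioi_mem_nhds h] with y hy
        exact (hDgt y hy).symm
      exact (hca.congr hev).continuousWithinAt
  -- continuity of Ψ on [0,∞)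
  have hΨcontAt : ∀ x ≥ (0:ℝ), ContinuousAt Ψ x := by
    intro x hx
    rcases lt_trichotomy x d with h | h | h
    · have hca : ContinuousAt (fun y => ψ₁ y / ψ₁' d) x := (hψ₁cont x hx).div_const _
      apply hca.congr
      filter_upwards [Iio_mem_nhds h] with y hy
      exact (hΨlt y hy).symm
    · exact h ▸ hΨd_d.differentiableAt.continuousAt
    · exact (hΨd_gt x h).differentiableAt.continuousAt
  have hΨcontOn : ContinuousOn Ψ (Set.Ici 0) :=
    fun x hx => (hΨcontAt x hx).continuousWithinAt
  have hΨintcont : ContinuousOn (fun s => Ψ s * Real.exp (al * s)) (Set.Ici 0) :=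
    hΨcontOn.mul hexpcont.continuousOn
  -- the HJB base identity for 0 < x ≤ d
  have hB : ∀ x, 0 < x → x ≤ d → g x * deriv Ψ x - (lam + del) * Ψ x
      + lam * (∫ y in (0:ℝ)..x, Ψ (x - y) * (al * Real.exp (-al * y))) = 0 := by
    intro x hx hxd
    have hJcongr : (∫ s in (0:ℝ)..x, Ψ s * Real.exp (al * s))
        = (1 / ψ₁' d) * ∫ s in (0:ℝ)..x, ψ₁ s * Real.exp (al * s) := by
      rw [← intervalIntegral.integral_const_mul]
      apply intervalIntegral.integral_congr
      intro s hs
      rw [Set.uIcc_of_le hx.le] at hs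
      show Ψ s * Real.exp (al * s) = 1 / ψ₁' d * (ψ₁ s * Real.exp (al * s))
      rw [hΨle s (hs.2.trans hxd)]
      ring
    have hDx : deriv Ψ x = ψ₁' x / ψ₁' d := by
      rcases lt_or_eq_of_le hxd with h | h
      · exact hDlt x hx.le h
      · rw [h, hDd, div_self hc1ne]
    rw [integral_shift, hJcongr, hDx, hΨle x hxd]
    linear_combination (hψ₁eq' x hx) / ψ₁' d
  refine ⟨hdiff, hderivCont, hDd, hD_ge_one, hD_le_one, ?_⟩
  intro x hx
  rcases le_or_gt x d with hxd | hxd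
  · -- case 0 < x ≤ d
    have hBx := hB x hx hxd
    have hDx1 : 1 ≤ deriv Ψ x := by
      rcases lt_or_eq_of_le hxd with h | h
      · exact hD_ge_one x hx h
      · rw [h, hDd]
    refine IsGreatest.csSup_eq ⟨⟨0, ⟨le_rfl, hu0.le⟩, ?_⟩, ?_⟩
    · simp only [sub_zero, add_zero]
      linarith [hBx]
    · rintro v ⟨u, hu, rfl⟩
      simp only []
      nlinarith [hBx, mul_nonneg hu.1 (sub_nonneg.mpr hDx1)]
  · -- case x > d
    set Jf : ℝ → ℝ := fun t => ∫ s in (0:ℝ)..t, Ψ s * Real.exp (al * s) with hJfdef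
    have hJder : ∀ t, 0 < t → HasDerivAt Jf (Ψ t * Real.exp (al * t)) t := by
      intro t ht
      apply intervalIntegral.integral_hasDerivAt_right
      · apply ContinuousOn.intervalIntegrable
        exact hΨintcont.mono (by rw [Set.uIcc_of_le ht.le]; exact fun y hy => hy.1)
      · exact ContinuousOn.stronglyMeasurableAtFilter isOpen_Ioi
          (hΨintcont.mono Set.Ioi_subset_Ici_self) t ht
      · exact (hΨcontAt t ht.le).mul hexpcont.continuousAt
    set φ2 : ℝ → ℝ := fun t => Real.exp (al * t) * ((g t - u0) * (ψ₂' t / ψ₂' d)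
        - (lam + del) * (u0 / del + ψ₂ t / ψ₂' d) + u0) + lam * al * Jf t with hφ2def
    have hexp_t : ∀ t : ℝ, HasDerivAt (fun y => Real.exp (al * y)) (al * Real.exp (al * t)) t := by
      intro t
      have h := (Real.hasDerivAt_exp (al * t)).comp t ((hasDerivAt_id t).const_mul al)
      simp only [Function.comp_def] at h
      exact h.congr_deriv (by ring)
    have hφ2der : ∀ t, d ≤ t → HasDerivAt φ2 0 t := by
      intro t ht
      have ht0 : (0:ℝ) < t := lt_of_lt_of_le hd ht
      have hK : HasDerivAt (fun y => (g y - u0) * (ψ₂' y / ψ₂' d)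
          - (lam + del) * (u0 / del + ψ₂ y / ψ₂' d) + u0)
          (g' t * (ψ₂' t / ψ₂' d) + (g t - u0) * (ψ₂'' t / ψ₂' d)
            - (lam + del) * (ψ₂' t / ψ₂' d)) t := by
        have h1 := ((hg t ht0.le).sub_const u0).mul ((hψ₂d2 t ht0.le).div_const (ψ₂' d))
        have h2 := (((hψ₂d t ht0.le).div_const (ψ₂' d)).const_add (u0 / del)).const_mul (lam + del)
        exact (h1.sub h2).add_const u0
      have hder := ((hexp_t t).mul hK).add ((hJder t ht0).const_mul (lam * al))
      have hzero : al * Real.exp (al * t) * ((g t - u0) * (ψ₂' t / ψ₂' d)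
          - (lam + del) * (u0 / del + ψ₂ t / ψ₂' d) + u0)
          + Real.exp (al * t) * (g' t * (ψ₂' t / ψ₂' d) + (g t - u0) * (ψ₂'' t / ψ₂' d)
            - (lam + del) * (ψ₂' t / ψ₂' d))
          + lam * al * (Ψ t * Real.exp (al * t)) = 0 := by
        have hode := hψ₂eq t ht0
        have hA : del * (u0 / del) = u0 := by field_simp
        rw [hΨge t ht]
        linear_combination (Real.exp (al * t) / ψ₂' d) * hode
          - (al * Real.exp (al * t)) * hA
      rw [hzero] at hder
      exact hder
    have hφ2d : φ2 d = 0 := by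
      have hBd := hB d hd le_rfl
      rw [hDd, hΨge d le_rfl, integral_shift] at hBd
      have hee : Real.exp (al * d) * Real.exp (-al * d) = 1 := by
        rw [← Real.exp_add, show al * d + -al * d = 0 by ring, Real.exp_zero]
      show Real.exp (al * d) * ((g d - u0) * (ψ₂' d / ψ₂' d)
          - (lam + del) * (u0 / del + ψ₂ d / ψ₂' d) + u0) + lam * al * Jf d = 0
      rw [div_self hc2ne]
      linear_combination Real.exp (al * d) * hBd - (lam * al * Jf d) * hee
    have hφ2x : φ2 x = 0 := by
      have hcont : ContinuousOn φ2 (Set.Icc d x) := fun t ht =>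
        ((hφ2der t ht.1).differentiableAt.continuousAt).continuousWithinAt
      have hder0 : ∀ t ∈ Set.Ico d x, HasDerivWithinAt φ2 0 (Set.Ici t) t :=
        fun t ht => (hφ2der t ht.1).hasDerivWithinAt
      have := constant_of_has_deriv_right_zero hcont hder0 x ⟨hxd.le, le_rfl⟩
      rw [this, hφ2d]
    -- conclude HJB at x
    have hDx : deriv Ψ x = ψ₂' x / ψ₂' d := hDgt x hxd
    have hDx1 : deriv Ψ x ≤ 1 := hD_le_one x hxd
    have heex : Real.exp (-al * x) * Real.exp (al * x) = 1 := by
      rw [← Real.exp_add, show -al * x + al * x = 0 by ring, Real.exp_zero]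
    have hφ2x' : Real.exp (al * x) * ((g x - u0) * (ψ₂' x / ψ₂' d)
        - (lam + del) * (u0 / del + ψ₂ x / ψ₂' d) + u0) + lam * al * Jf x = 0 := hφ2x
    have hval0 : (g x - u0) * deriv Ψ x - (lam + del) * Ψ x
        + lam * (∫ y in (0:ℝ)..x, Ψ (x - y) * (al * Real.exp (-al * y))) + u0 = 0 := by
      rw [integral_shift, hDx, hΨge x hxd.le]
      linear_combination Real.exp (-al * x) * hφ2x'
        - ((g x - u0) * (ψ₂' x / ψ₂' d) - (lam + del) * (u0 / del + ψ₂ x / ψ₂' d) + u0) * heex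
    refine IsGreatest.csSup_eq ⟨⟨u0, ⟨hu0.le, le_rfl⟩, hval0⟩, ?_⟩
    rintro v ⟨u, hu, rfl⟩
    simp only []
    nlinarith [hval0, mul_nonneg (sub_nonneg.mpr hu.2) (sub_nonneg.mpr hDx1)]
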